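/- Let G be a torsion-free abelian group and F a G-graded field. Then F is an integral domain. -/

import Mathlib

/-- Let `G` be a torsion-free abelian group and `F` a `G`-graded field (every
nonzero homogeneous element is a unit).  Then `F` is an integral domain. -/
theorem gradedField_isDomain_of_torsionFree
    (G : Type*) [AddCommGroup G] [DecidableEq G]
    (htf : ∀ (g : G) (n : ℕ), n ≠ 0 → n • g = 0 → g = 0)
    (F : Type*) [CommRing F] [Nontrivial F]
    (𝒜 : G → AddSubgroup F) [GradedRing 𝒜]
    (hfield : ∀ x : F, x ≠ 0 → SetLike.IsHomogeneousElem 𝒜 x → IsUnit x) :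
    IsDomain F := by
  classical
  -- `G` is torsion-free as a `ℤ`-module
  haveI : NoZeroSMulDivisors ℤ G := by
    constructor
    intro c x h
    rcases eq_or_ne c 0 with rfl | hc
    · exact Or.inl rfl
    · refine Or.inr (htf x c.natAbs (by simpa using hc) ?_)
      have h' : ((c.natAbs : ℤ)) • x = 0 := by
        rcases Int.natAbs_eq c with h1 | h1
        · rw [← h1]; exact h
        · have h2 : (c.natAbs : ℤ) = -c := by omega
          rw [h2, neg_smul, h, neg_zero]
      rwa [natCast_zsmul] at h'
  have hnzd : ∀ a b : F, a * b = 0 → a = 0 ∨ b = 0 := by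
    intro a b hab
    by_contra hcon
    push_neg at hcon
    obtain ⟨ha, hb⟩ := hcon
    set A := DirectSum.decompose 𝒜 a with hA
    set B := DirectSum.decompose 𝒜 b with hB
    have hABzero : A * B = 0 := by
      rw [hA, hB, ← DirectSum.decompose_mul, hab]
      simp
    have hAne : A.support.Nonempty := by
      rw [Finset.nonempty_iff_ne_empty]
      intro h
      apply ha
      have hA0 : A = 0 := DFinsupp.support_eq_empty.mp h
      have : DirectSum.decompose 𝒜 a = DirectSum.decompose 𝒜 0 := by
        rw [← hA, hA0]; simp
      exact (DirectSum.decompose 𝒜).injective this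
    have hBne : B.support.Nonempty := by
      rw [Finset.nonempty_iff_ne_empty]
      intro h
      apply hb
      have hB0 : B = 0 := DFinsupp.support_eq_empty.mp h
      have : DirectSum.decompose 𝒜 b = DirectSum.decompose 𝒜 0 := by
        rw [← hB, hB0]; simp
      exact (DirectSum.decompose 𝒜).injective this
    -- the finitely generated subgroup containing all relevant degrees
    set H : Submodule ℤ G :=
      Submodule.span ℤ (((A.support ∪ B.support : Finset G) : Set G)) with hH
    haveI : Module.Finite ℤ H := Module.Finite.span_of_finite ℤ (Finset.finite_toSet _)
    haveI : Module.Free ℤ H := Module.free_of_finite_type_torsion_free'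
    set ι := Module.Free.ChooseBasisIndex ℤ H with hι
    set bH := Module.Free.chooseBasis ℤ H with hbH
    letI : LinearOrder ι := IsWellOrder.linearOrder WellOrderingRel
    set f : G → Lex (ι →₀ ℤ) :=
      (fun g => if h : g ∈ H then toLex (bH.repr ⟨g, h⟩) else 0) with hf
    have hf_add : ∀ x ∈ H, ∀ y ∈ H, f (x + y) = f x + f y := by
      intro x hx y hy
      simp only [hf, dif_pos hx, dif_pos hy, dif_pos (H.add_mem hx hy)]
      have hxy : (⟨x + y, H.add_mem hx hy⟩ : H) = ⟨x, hx⟩ + ⟨y, hy⟩ := rfl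
      rw [hxy, map_add]
      rfl
    have hf_inj : ∀ x ∈ H, ∀ y ∈ H, f x = f y → x = y := by
      intro x hx y hy hxy
      simp only [hf, dif_pos hx, dif_pos hy] at hxy
      have h1 := bH.repr.injective (toLex.injective hxy)
      exact congrArg Subtype.val h1
    have hsubA : ∀ g ∈ A.support, g ∈ H := fun g hg =>
      Submodule.subset_span (Finset.mem_coe.mpr (Finset.mem_union_left _ hg))
    have hsubB : ∀ g ∈ B.support, g ∈ H := fun g hg =>
      Submodule.subset_span (Finset.mem_coe.mpr (Finset.mem_union_right _ hg))
    obtain ⟨ga, hga, hgamax⟩ := A.support.exists_max_image f hAne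
    obtain ⟨gb, hgb, hgbmax⟩ := B.support.exists_max_image f hBne
    have hfilter : ((A.support ×ˢ B.support).filter
        (fun ij : G × G => ij.1 + ij.2 = ga + gb)) = {(ga, gb)} := by
      apply Finset.eq_singleton_iff_unique_mem.mpr
      constructor
      · rw [Finset.mem_filter, Finset.mem_product]
        exact ⟨⟨hga, hgb⟩, rfl⟩
      · rintro ⟨x, y⟩ hxy
        rw [Finset.mem_filter, Finset.mem_product] at hxy
        obtain ⟨⟨hx, hy⟩, hsum⟩ := hxy
        have hxH := hsubA x hx
        have hyH := hsubB y hy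
        have hgaH := hsubA ga hga
        have hgbH := hsubB gb hgb
        have hfx : f x ≤ f ga := hgamax x hx
        have hfy : f y ≤ f gb := hgbmax y hy
        have hsum' : f x + f y = f ga + f gb := by
          rw [← hf_add x hxH y hyH, ← hf_add ga hgaH gb hgbH]
          exact congrArg f hsum
        have hx_eq : f x = f ga := by
          by_contra hne
          have hlt : f x < f ga := lt_of_le_of_ne hfx hne
          have : f x + f y < f ga + f gb := add_lt_add_of_lt_of_le hlt hfy
          exact absurd hsum' (ne_of_lt this)
        have hxga : x = ga := hf_inj x hxH ga hgaH hx_eq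
        have hygb : y = gb := by
          have := hsum
          rw [hxga] at this
          exact add_left_cancel this
        simp [hxga, hygb]
    have hcoe : ((A * B) (ga + gb) : F) = (A ga : F) * (B gb : F) := by
      rw [DirectSum.coe_mul_apply, hfilter, Finset.sum_singleton]
    have hzero : ((A * B) (ga + gb) : F) = 0 := by
      rw [hABzero]
      simp
    have hAga : (A ga : F) ≠ 0 := by
      intro h0
      exact (DFinsupp.mem_support_iff.mp hga) (Subtype.ext h0)
    have hBgb : (B gb : F) ≠ 0 := by
      intro h0
      exact (DFinsupp.mem_support_iff.mp hgb) (Subtype.ext h0)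
    have uA : IsUnit (A ga : F) := hfield _ hAga ⟨ga, (A ga).2⟩
    have uB : IsUnit (B gb : F) := hfield _ hBgb ⟨gb, (B gb).2⟩
    have : (A ga : F) * (B gb : F) ≠ 0 := (uA.mul uB).ne_zero
    exact this (hcoe ▸ hzero)
  haveI : NoZeroDivisors F := ⟨fun {a b} h => hnzd a b h⟩
  exact NoZeroDivisors.to_isDomain F
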